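/- Let 0 < δ < 1, let G be a simple graph on n vertices with independence number at most δn, and let φ be a map from the edge set of G to {1, 2}. Then there is a partition V(G) = U₁ ⊔ U₂ such that for each k ∈ {1, 2}, every subset S of U_k with |S| > √δ·n contains an edge e of G with φ(e) = k. (Equivalently, the independence number of the graph on U_k formed by the edges of color k is at most √δ·n for each k.) -/

import Mathlib

/-- Greedy packing: a maximal collection of pairwise disjoint "bad" sets of size `m`
inside `R`, such that the leftover contains no bad set of size `m`. -/
lemma pack_lemma {α : Type*} [DecidableEq α] (bad : Finset α → Prop) (m : ℕ) (hm : 0 < m)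
    (R : Finset α) :
    ∃ P : Finset (Finset α),
      (∀ A ∈ P, A ⊆ R ∧ A.card = m ∧ bad A) ∧
      (∀ A ∈ P, ∀ A' ∈ P, A ≠ A' → Disjoint A A') ∧
      (∀ S : Finset α, S ⊆ R \ P.sup id → S.card = m → ¬ bad S) := by
  classical
  induction R using Finset.strongInduction with
  | _ R ih =>
    by_cases h : ∃ A, A ⊆ R ∧ A.card = m ∧ bad A
    · obtain ⟨A, hAR, hAc, hAb⟩ := h
      have hne : A.Nonempty := Finset.card_pos.mp (hAc ▸ hm)
      have hss : R \ A ⊂ R := Finset.sdiff_ssubset hAR hne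
      obtain ⟨P, h1, h2, h3⟩ := ih _ hss
      refine ⟨insert A P, ?_, ?_, ?_⟩
      · intro A' hA'
        rcases Finset.mem_insert.mp hA' with rfl | hA'
        · exact ⟨hAR, hAc, hAb⟩
        · exact ⟨(h1 A' hA').1.trans (Finset.sdiff_subset), (h1 A' hA').2.1, (h1 A' hA').2.2⟩
      · have key : ∀ A' ∈ P, Disjoint A A' := fun A' hA' =>
          Finset.disjoint_sdiff.mono_right (h1 A' hA').1
        intro A1 hA1 A2 hA2 hne12
        rcases Finset.mem_insert.mp hA1 with h | h
        · rcases Finset.mem_insert.mp hA2 with h' | h'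
          · exact absurd (h.trans h'.symm) hne12
          · exact h ▸ key A2 h'
        · rcases Finset.mem_insert.mp hA2 with h' | h'
          · exact h' ▸ (key A1 h).symm
          · exact h2 A1 h A2 h' hne12
      · intro S hS hSc
        apply h3 S ?_ hSc
        intro x hx
        have hx' := hS hx
        rw [Finset.mem_sdiff] at hx' ⊢
        refine ⟨Finset.mem_sdiff.mpr ⟨hx'.1, ?_⟩, ?_⟩
        · intro hxA
          exact hx'.2 (Finset.mem_sup.mpr ⟨A, Finset.mem_insert_self _ _, hxA⟩)
        · intro hxP
          rw [Finset.mem_sup] at hxP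
          obtain ⟨A', hA', hxA'⟩ := hxP
          exact hx'.2 (Finset.mem_sup.mpr ⟨A', Finset.mem_insert_of_mem hA', hxA'⟩)
    · refine ⟨∅, by simp, by simp, ?_⟩
      intro S hS hSc hbad
      exact h ⟨S, by simpa using hS, hSc, hbad⟩

/-- (Balogh–Liu–Sharifzadeh) If an n-vertex graph G has independence number at most δn
and its edges are 2-colored, then the vertices can be partitioned into U₁ ⊔ U₂ so that
for each color k, every subset of U_k of size exceeding √δ·n contains an edge of color k. -/
theorem partition_small_indep (δ : ℝ) (hδ0 : 0 < δ) (hδ1 : δ < 1)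
    (n : ℕ) (G : SimpleGraph (Fin n))
    (hind : ∀ s : Finset (Fin n),
        (∀ x ∈ s, ∀ y ∈ s, x ≠ y → ¬ G.Adj x y) → (s.card : ℝ) ≤ δ * n)
    (φ : Sym2 (Fin n) → Fin 2) :
    ∃ U : Fin 2 → Set (Fin n), U 0 ∪ U 1 = Set.univ ∧ Disjoint (U 0) (U 1) ∧
      ∀ k : Fin 2, ∀ T : Finset (Fin n), ↑T ⊆ U k →
        Real.sqrt δ * n < (T.card : ℝ) →
        ∃ x ∈ T, ∃ y ∈ T, G.Adj x y ∧ φ (Sym2.mk x y) = k := by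
  classical
  set m : ℕ := ⌊Real.sqrt δ * n⌋₊ + 1 with hmdef
  obtain ⟨P, h1, h2, h3⟩ := pack_lemma
    (fun S : Finset (Fin n) => ∀ x ∈ S, ∀ y ∈ S, G.Adj x y → φ (Sym2.mk x y) ≠ 0)
    m (Nat.succ_pos _) Finset.univ
  set B : Finset (Fin n) := P.sup id with hBdef
  refine ⟨![(↑B : Set (Fin n))ᶜ, ↑B], by simp, by simp [disjoint_compl_left], ?_⟩
  intro k T hTU hcard
  have hsqrtnn : (0:ℝ) ≤ Real.sqrt δ * n := by positivity
  have hcard' : m ≤ T.card := by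
    have := (Nat.floor_lt hsqrtnn).mpr hcard
    omega
  have hmlt : Real.sqrt δ * n < (m : ℝ) := by
    have := Nat.lt_floor_add_one (Real.sqrt δ * n)
    push_cast
    exact_mod_cast this
  fin_cases k
  · -- color 0 side: complement of B
    simp only [Matrix.cons_val_zero] at hTU
    by_contra hcon
    push_neg at hcon
    obtain ⟨S, hST, hScard⟩ := Finset.exists_subset_card_eq hcard'
    refine h3 S ?_ hScard (fun x hx y hy hadj => hcon x (hST hx) y (hST hy) hadj)
    intro x hx
    rw [Finset.mem_sdiff]
    refine ⟨Finset.mem_univ x, ?_⟩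
    have := hTU (Finset.mem_coe.mpr (hST hx))
    simpa using this
  · -- color 1 side: B
    simp only [Matrix.cons_val_one, Matrix.head_cons] at hTU
    by_contra hcon
    push_neg at hcon
    have hfin2 : ∀ c : Fin 2, c = 0 ∨ c = 1 := by decide
    have hsmall : ∀ A ∈ P, (((T ∩ A).card : ℝ)) ≤ δ * n := by
      intro A hA
      apply hind
      intro x hx y hy _ hadj
      rcases hfin2 (φ (Sym2.mk x y)) with h0 | h1'
      · exact (h1 A hA).2.2 x (Finset.mem_of_mem_inter_right hx)
          y (Finset.mem_of_mem_inter_right hy) hadj h0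
      · exact hcon x (Finset.mem_of_mem_inter_left hx)
          y (Finset.mem_of_mem_inter_left hy) hadj h1'
    have hTsub : T ⊆ P.biUnion (fun A => T ∩ A) := by
      intro x hx
      have hxB : x ∈ B := by
        have := hTU (Finset.mem_coe.mpr hx)
        simpa using this
      rw [hBdef, Finset.mem_sup] at hxB
      obtain ⟨A, hA, hxA⟩ := hxB
      exact Finset.mem_biUnion.mpr ⟨A, hA, Finset.mem_inter.mpr ⟨hx, hxA⟩⟩
    have hT1 : (T.card : ℝ) ≤ (P.card : ℝ) * (δ * n) := by
      have c1 : T.card ≤ ∑ A ∈ P, (T ∩ A).card :=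
        (Finset.card_le_card hTsub).trans (Finset.card_biUnion_le)
      have c2 : (∑ A ∈ P, ((T ∩ A).card : ℝ)) ≤ (P.card : ℝ) * (δ * n) := by
        calc (∑ A ∈ P, ((T ∩ A).card : ℝ)) ≤ ∑ _A ∈ P, (δ * n) :=
              Finset.sum_le_sum (fun A hA => hsmall A hA)
          _ = (P.card : ℝ) * (δ * n) := by rw [Finset.sum_const]; ring
      calc (T.card : ℝ) ≤ (∑ A ∈ P, ((T ∩ A).card : ℝ)) := by exact_mod_cast c1
        _ ≤ _ := c2
    have hPm : P.card * m ≤ n := by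
      have hd : ∀ A ∈ P, ∀ A' ∈ P, A ≠ A' → Disjoint (id A) (id A') := h2
      have := Finset.card_biUnion hd
      have hsum : (∑ A ∈ P, (id A).card) = P.card * m := by
        calc (∑ A ∈ P, (id A).card) = ∑ _A ∈ P, m :=
              Finset.sum_congr rfl (fun A hA => (h1 A hA).2.1)
          _ = P.card * m := by rw [Finset.sum_const, smul_eq_mul]
      have hle : (P.biUnion id).card ≤ n := by
        have := Finset.card_le_univ (P.biUnion id)
        simpa using this
      omega
    have hPm' : (P.card : ℝ) * (m : ℝ) ≤ (n : ℝ) := by exact_mod_cast hPm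
    have hsq : Real.sqrt δ * Real.sqrt δ = δ := Real.mul_self_sqrt hδ0.le
    have e1 : (P.card : ℝ) * (Real.sqrt δ * n) ≤ (P.card : ℝ) * (m : ℝ) :=
      mul_le_mul_of_nonneg_left hmlt.le (Nat.cast_nonneg _)
    have e2 : (P.card : ℝ) * (Real.sqrt δ * n) ≤ n := e1.trans hPm'
    have e3 : Real.sqrt δ * ((P.card : ℝ) * (Real.sqrt δ * n)) ≤ Real.sqrt δ * n :=
      mul_le_mul_of_nonneg_left e2 (Real.sqrt_nonneg δ)
    have e4 : Real.sqrt δ * ((P.card : ℝ) * (Real.sqrt δ * n)) = (P.card : ℝ) * (δ * n) := by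
      linear_combination ((P.card : ℝ) * (n : ℝ)) * hsq
    linarith
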